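/- arXiv:1903.05613 — 2 statements merged into one kernel-verified Lean document; each statement's English description precedes it below -/
import Mathlib

section
/- Let G be a simple connected graph on p vertices with diameter d, and L₀ ⊆ V(G), k = diam(L₀), δ as above. If rn(G) = (p−1)(d−k+1) + δ − 2·Σ_v d(v,L₀), then there exists an ordering x₀,...,x_{p−1} of V(G) induced by an optimal radio labeling φ such that: (a) d(x_i, x_{i+1}) = d(x_i, L₀) + d(x_{i+1}, L₀) + k for all i; (b) x₀, x_{p−1} ∈ L₀ if |L₀| ≥ 2, and x₀ ∈ L₀, d(x_{p−1}, L₀) = 1 if |L₀| = 1; (c) φ(x₀) = 0 and φ(x_{i+1}) = φ(x_i) + d + 1 − d(x_i, L₀) − d(x_{i+1}, L₀) − k. -/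
open SimpleGraph Finset

/-- The Petersen graph as the Kneser graph K(5,2). -/
def petersen : SimpleGraph {s : Finset (Fin 5) // s.card = 2} where
  Adj a b := Disjoint a.1 b.1
  symm := ⟨fun _ _ h => h.symm⟩
  loopless := ⟨fun a h => by
    have h0 : a.1 = ⊥ := disjoint_self.mp h
    have h2 := a.2
    rw [h0] at h2
    simp at h2⟩

/-- A radio labeling of `G`: for all distinct `u, v`,
`d(u,v) + |φ(u) - φ(v)| ≥ diam(G) + 1`. -/
def IsRadioLabeling {V : Type*} (G : SimpleGraph V) (φ : V → ℕ) : Prop :=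
  ∀ u v : V, u ≠ v → (G.diam : ℤ) + 1 ≤ (G.dist u v : ℤ) + |(φ u : ℤ) - (φ v : ℤ)|

/-- The span of a labeling: the maximum difference between two labels. -/
noncomputable def span {V : Type*} (φ : V → ℕ) : ℕ :=
  sSup (Set.range fun p : V × V => φ p.1 - φ p.2)

/-- The radio number of `G`: the minimum span over all radio labelings. -/
noncomputable def radioNumber {V : Type*} (G : SimpleGraph V) : ℕ :=
  sInf {s | ∃ φ : V → ℕ, IsRadioLabeling G φ ∧ span φ = s}

/-- `d(v, S)`: the minimum distance from `v` to a vertex of `S`. -/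
noncomputable def distToSet {V : Type*} (G : SimpleGraph V) (v : V) (S : Finset V) : ℕ :=
  sInf ((fun w => G.dist v w) '' ↑S)

/-- `diam(S)`: the maximum distance in `G` between two vertices of `S`. -/
noncomputable def setDiam {V : Type*} (G : SimpleGraph V) (S : Finset V) : ℕ :=
  sSup {d | ∃ x ∈ S, ∃ y ∈ S, G.dist x y = d}


set_option linter.unusedSectionVars false

section Helpers
variable {V : Type*} [Fintype V] {G : SimpleGraph V}

lemma ediam_ne_top' (hG : G.Connected) : G.ediam ≠ ⊤ := by
  have : Nonempty V := hG.nonempty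
  obtain ⟨u, v, huv⟩ := SimpleGraph.exists_edist_eq_ediam_of_finite (G := G)
  rw [← huv]
  exact SimpleGraph.edist_ne_top_iff_reachable.mpr (hG.preconnected u v)

lemma distToSet_exists (G : SimpleGraph V) (v : V) {L₀ : Finset V} (hL : L₀.Nonempty) :
    ∃ w ∈ L₀, G.dist v w = distToSet G v L₀ := by
  have hne : ((fun w => G.dist v w) '' ↑L₀).Nonempty :=
    Set.Nonempty.image _ (by exact_mod_cast hL.to_set)
  obtain ⟨w, hw, hdw⟩ := Nat.sInf_mem hne
  exact ⟨w, hw, hdw⟩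

lemma distToSet_le (G : SimpleGraph V) (v : V) {L₀ : Finset V} {w : V} (hw : w ∈ L₀) :
    distToSet G v L₀ ≤ G.dist v w :=
  Nat.sInf_le ⟨w, by simpa using hw, rfl⟩

lemma mem_of_distToSet_eq_zero (hG : G.Connected) {v : V} {L₀ : Finset V} (hL : L₀.Nonempty)
    (h : distToSet G v L₀ = 0) : v ∈ L₀ := by
  obtain ⟨w, hw, hdw⟩ := distToSet_exists G v hL
  rw [h] at hdw
  rwa [hG.dist_eq_zero_iff.mp hdw]

lemma distToSet_eq_zero_of_mem (G : SimpleGraph V) {v : V} {L₀ : Finset V} (hv : v ∈ L₀) :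
    distToSet G v L₀ = 0 := by
  have h := distToSet_le G v hv
  simp [SimpleGraph.dist_self] at h
  omega

lemma dist_le_setDiam (hG : G.Connected) {L₀ : Finset V} {a b : V} (ha : a ∈ L₀) (hb : b ∈ L₀) :
    G.dist a b ≤ setDiam G L₀ := by
  apply le_csSup
  · exact ⟨G.diam, by rintro d ⟨u, hu, w, hw, rfl⟩; exact SimpleGraph.dist_le_diam (ediam_ne_top' hG)⟩
  · exact ⟨a, ha, b, hb, rfl⟩

lemma dist_le_key (hG : G.Connected) {L₀ : Finset V} (hL : L₀.Nonempty) (u v : V) :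
    G.dist u v ≤ distToSet G u L₀ + distToSet G v L₀ + setDiam G L₀ := by
  obtain ⟨a, ha, hda⟩ := distToSet_exists G u hL
  obtain ⟨b, hb, hdb⟩ := distToSet_exists G v hL
  calc G.dist u v ≤ G.dist u a + G.dist a v := hG.dist_triangle
    _ ≤ G.dist u a + (G.dist a b + G.dist b v) := by
        exact Nat.add_le_add_left hG.dist_triangle _
    _ = G.dist u a + G.dist v b + G.dist a b := by
        rw [show G.dist b v = G.dist v b from SimpleGraph.dist_comm]; ring
    _ ≤ distToSet G u L₀ + distToSet G v L₀ + setDiam G L₀ := by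
        rw [hda, hdb]; exact Nat.add_le_add_left (dist_le_setDiam hG ha hb) _

lemma span_eq {φ : V → ℕ} {a b : V} (hmax : ∀ v, φ v ≤ φ a) (hmin : ∀ v, φ b ≤ φ v) :
    span φ = φ a - φ b := by
  have : Nonempty V := ⟨a⟩
  apply le_antisymm
  · apply csSup_le (Set.range_nonempty _)
    rintro n ⟨p, rfl⟩
    exact tsub_le_tsub (hmax p.1) (hmin p.2)
  · apply le_csSup
    · exact ⟨φ a - φ b, by rintro n ⟨p, rfl⟩; exact tsub_le_tsub (hmax p.1) (hmin p.2)⟩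
    · exact ⟨(a, b), rfl⟩

lemma shift_radio {φ : V → ℕ} {c : ℕ} (hc : ∀ v, c ≤ φ v) (h : IsRadioLabeling G φ) :
    IsRadioLabeling G (fun v => φ v - c) := by
  intro u v huv
  have h1 : ((φ u - c : ℕ) : ℤ) = (φ u : ℤ) - c := by
    rw [Nat.cast_sub (hc u)]
  have h2 : ((φ v - c : ℕ) : ℤ) = (φ v : ℤ) - c := by
    rw [Nat.cast_sub (hc v)]
  have := h u v huv
  simp only [h1, h2]
  have : |(φ u : ℤ) - c - ((φ v : ℤ) - c)| = |(φ u : ℤ) - φ v| := by ring_nf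
  rw [this]
  exact h u v huv

lemma span_shift (φ : V → ℕ) {c : ℕ} (hc : ∀ v, c ≤ φ v) :
    span (fun v => φ v - c) = span φ := by
  unfold span
  have h : (fun p : V × V => (φ p.1 - c) - (φ p.2 - c)) = fun p : V × V => φ p.1 - φ p.2 := by
    funext p; exact Nat.sub_sub_sub_cancel_right (hc p.2)
  rw [h]

lemma reverse_radio {φ : V → ℕ} {M : ℕ} (hM : ∀ v, φ v ≤ M) (h : IsRadioLabeling G φ) :
    IsRadioLabeling G (fun v => M - φ v) := by
  intro u v huv
  have h1 : ((M - φ u : ℕ) : ℤ) = (M : ℤ) - φ u := by rw [Nat.cast_sub (hM u)]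
  have h2 : ((M - φ v : ℕ) : ℤ) = (M : ℤ) - φ v := by rw [Nat.cast_sub (hM v)]
  simp only [h1, h2]
  have : |(M : ℤ) - φ u - ((M : ℤ) - φ v)| = |(φ u : ℤ) - φ v| := by
    rw [show (M : ℤ) - φ u - ((M : ℤ) - φ v) = -((φ u : ℤ) - φ v) by ring, abs_neg]
  rw [this]
  exact h u v huv

lemma span_reverse (φ : V → ℕ) {M : ℕ} (hM : ∀ v, φ v ≤ M) :
    span (fun v => M - φ v) = span φ := by
  unfold span
  congr 1
  ext n
  constructor
  · rintro ⟨p, rfl⟩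
    exact ⟨(p.2, p.1), (tsub_tsub_tsub_cancel_left (hM p.2)).symm⟩
  · rintro ⟨p, rfl⟩
    exact ⟨(p.2, p.1), tsub_tsub_tsub_cancel_left (hM p.1)⟩

lemma exists_optimal (G : SimpleGraph V) :
    ∃ φ : V → ℕ, IsRadioLabeling G φ ∧ span φ = radioNumber G := by
  classical
  have hne : {s | ∃ φ : V → ℕ, IsRadioLabeling G φ ∧ span φ = s}.Nonempty := by
    refine ⟨span (fun v => (Fintype.equivFin V v : ℕ) * (G.diam + 1)),
      (fun v => (Fintype.equivFin V v : ℕ) * (G.diam + 1)), ?_, rfl⟩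
    intro u v huv
    have hne' : (Fintype.equivFin V u : ℕ) ≠ (Fintype.equivFin V v : ℕ) := by
      intro h
      exact huv ((Fintype.equivFin V).injective (Fin.ext h))
    set i := (Fintype.equivFin V u : ℕ)
    set j := (Fintype.equivFin V v : ℕ)
    have h1 : (1 : ℤ) ≤ |(i : ℤ) - j| := by
      have hij : (i : ℤ) ≠ j := by exact_mod_cast hne'
      rcases hij.lt_or_gt with h | h
      · rw [abs_of_neg (by omega)]; omega
      · rw [abs_of_pos (by omega)]; omega
    have h2 : |(↑(i * (G.diam + 1)) : ℤ) - ↑(j * (G.diam + 1))| = |(i:ℤ) - j| * (G.diam + 1) := by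
      push_cast
      rw [← sub_mul, abs_mul, abs_of_nonneg (by positivity : (0:ℤ) ≤ (G.diam : ℤ) + 1)]
    have h3 : (0 : ℤ) ≤ G.dist u v := by positivity
    calc (G.diam : ℤ) + 1 = 1 * ((G.diam : ℤ) + 1) := by ring
      _ ≤ |(i:ℤ) - j| * (G.diam + 1) := by
          apply mul_le_mul_of_nonneg_right h1 (by positivity)
      _ = |(↑(i * (G.diam + 1)) : ℤ) - ↑(j * (G.diam + 1))| := h2.symm
      _ ≤ (G.dist u v : ℤ) + |(↑(i * (G.diam + 1)) : ℤ) - ↑(j * (G.diam + 1))| := by linarith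
  obtain ⟨φ, hφ, hs⟩ := Nat.sInf_mem hne
  exact ⟨φ, hφ, hs⟩

end Helpers

open Fin.NatCast in
lemma core {V : Type*} [Fintype V] (G : SimpleGraph V) (hG : G.Connected)
    {m : ℕ} (hm : Fintype.card V = m + 1)
    (L₀ : Finset V) (hL : L₀.Nonempty)
    (hrn : (radioNumber G : ℤ)
      = ((Fintype.card V : ℤ) - 1) * ((G.diam : ℤ) - (setDiam G L₀ : ℤ) + 1)
        + (if L₀.card = 1 then 1 else 0)
        - 2 * ∑ v : V, (distToSet G v L₀ : ℤ))
    (φ : V → ℕ) (hφ : IsRadioLabeling G φ) (hs : span φ = radioNumber G) :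
    ∃ x : Fin (m + 1) → V, Function.Bijective x
      ∧ (∀ i j : Fin (m + 1), i < j → φ (x i) < φ (x j))
      ∧ (∀ t : Fin m, G.dist (x t.castSucc) (x t.succ)
          = distToSet G (x t.castSucc) L₀ + distToSet G (x t.succ) L₀ + setDiam G L₀)
      ∧ (∀ t : Fin m, (φ (x t.succ) : ℤ) = (φ (x t.castSucc) : ℤ) + (G.diam : ℤ) + 1
          - (distToSet G (x t.castSucc) L₀ : ℤ) - (distToSet G (x t.succ) L₀ : ℤ)
          - (setDiam G L₀ : ℤ))
      ∧ (∀ v, φ (x 0) ≤ φ v)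
      ∧ (∀ v, φ v ≤ φ (x (Fin.last m)))
      ∧ (2 ≤ L₀.card → x 0 ∈ L₀ ∧ x (Fin.last m) ∈ L₀)
      ∧ (L₀.card = 1 →
          distToSet G (x 0) L₀ + distToSet G (x (Fin.last m)) L₀ = 1) := by
  classical
  have hinj : Function.Injective φ := by
    intro u v h
    by_contra hne
    have h1 := hφ u v hne
    rw [h] at h1
    simp only [sub_self, abs_zero, add_zero] at h1
    have hd : G.dist u v ≤ G.diam := SimpleGraph.dist_le_diam (ediam_ne_top' hG)
    have : (G.dist u v : ℤ) ≤ (G.diam : ℤ) := by exact_mod_cast hd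
    omega
  -- build the ordering
  set S : Finset ℕ := Finset.image φ Finset.univ with hS
  have hcard : S.card = m + 1 := by
    rw [hS, Finset.card_image_of_injective _ hinj, Finset.card_univ, hm]
  set e := S.orderIsoOfFin hcard with he
  have hx : ∀ i : Fin (m + 1), ∃ v : V, φ v = (e i : ℕ) := by
    intro i
    have h2 : (e i : ℕ) ∈ Finset.image φ Finset.univ := (e i).2
    rw [Finset.mem_image] at h2
    obtain ⟨v, _, hv⟩ := h2
    exact ⟨v, hv⟩
  choose x hxφ using hx
  have hmono : ∀ i j : Fin (m + 1), i < j → φ (x i) < φ (x j) := by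
    intro i j hij
    rw [hxφ i, hxφ j]
    exact_mod_cast e.strictMono hij
  have hxinj : Function.Injective x := by
    intro i j h
    by_contra hne
    rcases lt_or_gt_of_ne hne with hlt | hlt
    · exact absurd (hmono i j hlt) (by rw [h]; exact lt_irrefl _)
    · exact absurd (hmono j i hlt) (by rw [h]; exact lt_irrefl _)
  have hbij : Function.Bijective x := by
    rw [Fintype.bijective_iff_injective_and_card]
    exact ⟨hxinj, by simp [hm]⟩
  have hmin : ∀ v, φ (x 0) ≤ φ v := by
    intro v
    obtain ⟨i, rfl⟩ := hbij.surjective v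
    rcases eq_or_lt_of_le (Fin.zero_le i) with h | h
    · rw [← h]
    · exact le_of_lt (hmono 0 i h)
  have hmax : ∀ v, φ v ≤ φ (x (Fin.last m)) := by
    intro v
    obtain ⟨i, rfl⟩ := hbij.surjective v
    rcases eq_or_lt_of_le (Fin.le_last i) with h | h
    · rw [h]
    · exact le_of_lt (hmono i (Fin.last m) h)
  -- notation
  set D : V → ℕ := fun v => distToSet G v L₀ with hD
  set kk : ℕ := setDiam G L₀ with hkk
  set A : Fin m → ℤ := fun t => (G.diam : ℤ) + 1 - D (x t.castSucc) - D (x t.succ) - kk with hA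
  set B : Fin m → ℤ := fun t => (φ (x t.succ) : ℤ) - φ (x t.castSucc) with hB
  have hAB : ∀ t : Fin m, A t ≤ B t := by
    intro t
    have hlt : φ (x t.castSucc) < φ (x t.succ) := hmono _ _ Fin.castSucc_lt_succ
    have hne : x t.castSucc ≠ x t.succ := by
      intro h; rw [h] at hlt; exact lt_irrefl _ hlt
    have h1 := hφ _ _ hne
    have hlt' : (φ (x t.castSucc) : ℤ) < φ (x t.succ) := by exact_mod_cast hlt
    have habs : |(φ (x t.castSucc) : ℤ) - φ (x t.succ)| = B t := by
      simp only [hB]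
      rw [abs_sub_comm]
      exact abs_of_pos (by omega)
    rw [habs] at h1
    have h2 : G.dist (x t.castSucc) (x t.succ) ≤ D (x t.castSucc) + D (x t.succ) + kk :=
      dist_le_key hG hL _ _
    have h2' : (G.dist (x t.castSucc) (x t.succ) : ℤ)
        ≤ (D (x t.castSucc) : ℤ) + D (x t.succ) + kk := by exact_mod_cast h2
    simp only [hA, hB] at h1 ⊢
    omega
  -- telescoping sum of B
  have _ : NeZero (m + 1) := ⟨Nat.succ_ne_zero m⟩
  set F : ℕ → ℤ := fun i => (φ (x (i : Fin (m + 1))) : ℤ) with hF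
  have hcastc : ∀ t : Fin m, ((t : ℕ) : Fin (m + 1)) = t.castSucc := by
    intro t
    apply Fin.ext
    rw [Fin.val_cast_of_lt (Nat.lt_succ_of_lt t.isLt)]
    rfl
  have hcasts : ∀ t : Fin m, (((t : ℕ) + 1 : ℕ) : Fin (m + 1)) = t.succ := by
    intro t
    apply Fin.ext
    rw [Fin.val_cast_of_lt (Nat.succ_lt_succ t.isLt)]
    rfl
  have hsumB : ∑ t : Fin m, B t = (φ (x (Fin.last m)) : ℤ) - φ (x 0) := by
    have h1 : ∀ t : Fin m, B t = F ((t : ℕ) + 1) - F (t : ℕ) := by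
      intro t
      rw [hF]
      dsimp only
      rw [hcastc t, hcasts t]
    calc ∑ t : Fin m, B t = ∑ t : Fin m, (F ((t : ℕ) + 1) - F (t : ℕ)) :=
          Finset.sum_congr rfl (fun t _ => h1 t)
      _ = ∑ i ∈ Finset.range m, (F (i + 1) - F i) :=
          Fin.sum_univ_eq_sum_range (fun i => F (i + 1) - F i) m
      _ = F m - F 0 := Finset.sum_range_sub F m
      _ = (φ (x (Fin.last m)) : ℤ) - φ (x 0) := by
          rw [hF]; dsimp only
          rw [Fin.natCast_eq_last, Nat.cast_zero]
  -- sums of D over castSucc / succ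
  have hsumall : ∑ i : Fin (m + 1), (D (x i) : ℤ) = ∑ v : V, (D v : ℤ) :=
    Fintype.sum_bijective x hbij _ _ (fun i => rfl)
  have hsumc : ∑ t : Fin m, (D (x t.castSucc) : ℤ)
      = ∑ v : V, (D v : ℤ) - D (x (Fin.last m)) := by
    have := Fin.sum_univ_castSucc (fun i : Fin (m + 1) => (D (x i) : ℤ))
    rw [this] at hsumall
    omega
  have hsums : ∑ t : Fin m, (D (x t.succ) : ℤ) = ∑ v : V, (D v : ℤ) - D (x 0) := by
    have := Fin.sum_univ_succ (fun i : Fin (m + 1) => (D (x i) : ℤ))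
    rw [this] at hsumall
    omega
  have hsumA : ∑ t : Fin m, A t
      = m * ((G.diam : ℤ) + 1 - kk) - 2 * ∑ v : V, (D v : ℤ)
        + D (x 0) + D (x (Fin.last m)) := by
    have h1 : ∑ t : Fin m, A t
        = ∑ t : Fin m, ((G.diam : ℤ) + 1 - kk)
          - ∑ t : Fin m, (D (x t.castSucc) : ℤ) - ∑ t : Fin m, (D (x t.succ) : ℤ) := by
      rw [← Finset.sum_sub_distrib, ← Finset.sum_sub_distrib]
      apply Finset.sum_congr rfl
      intro t _
      rw [hA]; ring
    rw [h1, hsumc, hsums, Finset.sum_const, Finset.card_univ, Fintype.card_fin]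
    push_cast
    ring
  -- the span equals the telescoped difference
  have hspanZ : (φ (x (Fin.last m)) : ℤ) - φ (x 0) = (radioNumber G : ℤ) := by
    have h1 : span φ = φ (x (Fin.last m)) - φ (x 0) := span_eq hmax hmin
    rw [← hs, h1, Nat.cast_sub (hmin _)]
  -- the key equation
  have key : ∑ t : Fin m, B t
      = ∑ t : Fin m, A t + ((if L₀.card = 1 then (1 : ℤ) else 0)
        - D (x 0) - D (x (Fin.last m))) := by
    rw [hsumB, hsumA, hspanZ, hrn, hm]
    push_cast
    ring
  have hgap : (D (x 0) : ℤ) + D (x (Fin.last m)) ≤ (if L₀.card = 1 then (1 : ℤ) else 0) := by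
    have := Finset.sum_le_sum (fun t (_ : t ∈ Finset.univ) => hAB t)
    omega
  have hDsum : (D (x 0) : ℤ) + D (x (Fin.last m)) = (if L₀.card = 1 then (1 : ℤ) else 0) := by
    by_cases hc : L₀.card = 1
    · simp only [hc, if_pos] at hgap ⊢
      rcases Nat.eq_zero_or_pos m with hm0 | hm0
      · exfalso
        subst hm0
        have hlast : Fin.last 0 = (0 : Fin 1) := rfl
        rw [hlast] at key
        simp only [Finset.univ_eq_empty, Finset.sum_empty, hc, if_pos] at key
        omega
      · have hne0 : x 0 ≠ x (Fin.last m) := by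
          intro h
          have : (0 : Fin (m + 1)) = Fin.last m := hxinj h
          have := congrArg Fin.val this
          simp [Fin.last] at this
          omega
        have hnotboth : ¬(D (x 0) = 0 ∧ D (x (Fin.last m)) = 0) := by
          rintro ⟨h0, h1⟩
          obtain ⟨a, ha⟩ := Finset.card_eq_one.mp hc
          have m0 : x 0 ∈ L₀ := mem_of_distToSet_eq_zero hG hL h0
          have m1 : x (Fin.last m) ∈ L₀ := mem_of_distToSet_eq_zero hG hL h1
          rw [ha, Finset.mem_singleton] at m0 m1
          exact hne0 (m0.trans m1.symm)
        have : 1 ≤ D (x 0) + D (x (Fin.last m)) := by omega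
        have : (1 : ℤ) ≤ (D (x 0) : ℤ) + D (x (Fin.last m)) := by exact_mod_cast this
        omega
    · simp only [hc, if_neg, if_false] at hgap ⊢
      have h0 : (0 : ℤ) ≤ (D (x 0) : ℤ) := Int.natCast_nonneg _
      have h1 : (0 : ℤ) ≤ (D (x (Fin.last m)) : ℤ) := Int.natCast_nonneg _
      omega
  have hsum_eq : ∑ t : Fin m, A t = ∑ t : Fin m, B t := by omega
  have heq : ∀ t : Fin m, A t = B t := by
    intro t
    exact (Finset.sum_eq_sum_iff_of_le (fun t _ => hAB t)).mp hsum_eq t (Finset.mem_univ t)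
  -- distance equality per step
  have hdist : ∀ t : Fin m, G.dist (x t.castSucc) (x t.succ)
      = D (x t.castSucc) + D (x t.succ) + kk := by
    intro t
    have hlt : φ (x t.castSucc) < φ (x t.succ) := hmono _ _ Fin.castSucc_lt_succ
    have hne : x t.castSucc ≠ x t.succ := by
      intro h; rw [h] at hlt; exact lt_irrefl _ hlt
    have h1 := hφ _ _ hne
    have hlt' : (φ (x t.castSucc) : ℤ) < φ (x t.succ) := by exact_mod_cast hlt
    have habs : |(φ (x t.castSucc) : ℤ) - φ (x t.succ)| = B t := by
      simp only [hB]
      rw [abs_sub_comm]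
      exact abs_of_pos (by omega)
    rw [habs, ← heq t] at h1
    have h2 : G.dist (x t.castSucc) (x t.succ) ≤ D (x t.castSucc) + D (x t.succ) + kk :=
      dist_le_key hG hL _ _
    have h2' : (G.dist (x t.castSucc) (x t.succ) : ℤ)
        ≤ (D (x t.castSucc) : ℤ) + D (x t.succ) + kk := by exact_mod_cast h2
    have h3 : (D (x t.castSucc) : ℤ) + D (x t.succ) + kk ≤ G.dist (x t.castSucc) (x t.succ) := by
      simp only [hA] at h1; omega
    exact_mod_cast le_antisymm h2' h3
  simp only [hD, hkk] at hdist hDsum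
  refine ⟨x, hbij, hmono, hdist, ?_, hmin, hmax, ?_, ?_⟩
  · intro t
    have h4 := heq t
    simp only [hA, hB, hD, hkk] at h4
    omega
  · intro h2
    have hc : L₀.card ≠ 1 := by omega
    rw [if_neg hc] at hDsum
    have h0 : distToSet G (x 0) L₀ = 0 := by omega
    have h1 : distToSet G (x (Fin.last m)) L₀ = 0 := by omega
    exact ⟨mem_of_distToSet_eq_zero hG hL h0, mem_of_distToSet_eq_zero hG hL h1⟩
  · intro hc
    rw [if_pos hc] at hDsum
    omega

theorem stmt_5 {V : Type*} [Fintype V] (G : SimpleGraph V) (hG : G.Connected)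
    {m : ℕ} (hm : Fintype.card V = m + 1)
    (L₀ : Finset V) (hL : L₀.Nonempty)
    (hrn : (radioNumber G : ℤ)
      = ((Fintype.card V : ℤ) - 1) * ((G.diam : ℤ) - (setDiam G L₀ : ℤ) + 1)
        + (if L₀.card = 1 then 1 else 0)
        - 2 * ∑ v : V, (distToSet G v L₀ : ℤ)) :
    ∃ (x : Fin (m + 1) → V) (φ : V → ℕ), Function.Bijective x
      ∧ IsRadioLabeling G φ ∧ span φ = radioNumber G
      ∧ (∀ i j : Fin (m + 1), i < j → φ (x i) < φ (x j))
      ∧ (∀ t : Fin m, G.dist (x t.castSucc) (x t.succ)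
          = distToSet G (x t.castSucc) L₀ + distToSet G (x t.succ) L₀ + setDiam G L₀)
      ∧ (2 ≤ L₀.card → x 0 ∈ L₀ ∧ x (Fin.last m) ∈ L₀)
      ∧ (L₀.card = 1 → x 0 ∈ L₀ ∧ distToSet G (x (Fin.last m)) L₀ = 1)
      ∧ φ (x 0) = 0
      ∧ (∀ t : Fin m, (φ (x t.succ) : ℤ) = (φ (x t.castSucc) : ℤ) + (G.diam : ℤ) + 1
          - (distToSet G (x t.castSucc) L₀ : ℤ) - (distToSet G (x t.succ) L₀ : ℤ)
          - (setDiam G L₀ : ℤ)) := by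
  classical
  obtain ⟨φ0, hφ0, hs0⟩ := exists_optimal G
  obtain ⟨x, hbij, hmono, hdist, hstep, hmin, hmax, hge2, hcard1⟩ :=
    core G hG hm L₀ hL hrn φ0 hφ0 hs0
  by_cases hgood : L₀.card ≠ 1 ∨ distToSet G (x 0) L₀ = 0
  · -- keep ordering, shift labels down by φ0 (x 0)
    set c := φ0 (x 0) with hc
    set φ1 : V → ℕ := fun v => φ0 v - c with hφ1
    have hcle : ∀ v, c ≤ φ0 v := hmin
    have hcast : ∀ v, (φ1 v : ℤ) = (φ0 v : ℤ) - c := by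
      intro v
      simp only [hφ1]
      rw [Nat.cast_sub (hcle v)]
    refine ⟨x, φ1, hbij, shift_radio hcle hφ0, ?_, ?_, hdist, hge2, ?_, ?_, ?_⟩
    · rw [hφ1, span_shift φ0 hcle]; exact hs0
    · intro i j hij
      have h1 := hmono i j hij
      have h2 := hcle (x i)
      have h3 := hcle (x j)
      simp only [hφ1]
      omega
    · intro h1
      rcases hgood with h | h
      · exact absurd h1 h
      · have hsum := hcard1 h1
        refine ⟨mem_of_distToSet_eq_zero hG hL h, by omega⟩
    · simp only [hφ1, hc]; omega
    · intro t
      have := hstep t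
      rw [hcast, hcast]
      omega
  · -- reverse the labeling
    push_neg at hgood
    obtain ⟨hc1, hx0⟩ := hgood
    have hsum := hcard1 hc1
    set M := φ0 (x (Fin.last m)) with hM
    set ψ : V → ℕ := fun v => M - φ0 v with hψdef
    have hψ : IsRadioLabeling G ψ := reverse_radio hmax hφ0
    have hsψ : span ψ = radioNumber G := by
      rw [hψdef, span_reverse φ0 hmax]; exact hs0
    obtain ⟨x', hbij', hmono', hdist', hstep', hmin', hmax', hge2', hcard1'⟩ :=
      core G hG hm L₀ hL hrn ψ hψ hsψ
    have hψ0 : ψ (x' 0) = 0 := by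
      have h1 := hmin' (x (Fin.last m))
      have h2 : ψ (x (Fin.last m)) = 0 := by simp [hψdef, hM]
      omega
    have hφ'0 : φ0 (x' 0) = M := by
      have h1 := hmax (x' 0)
      simp only [hψdef] at hψ0
      omega
    have hx'0 : x' 0 = x (Fin.last m) := by
      obtain ⟨i, hi⟩ := hbij.surjective (x' 0)
      rcases lt_trichotomy i (Fin.last m) with h | h | h
      · exfalso
        have := hmono i (Fin.last m) h
        rw [hi, hφ'0] at this
        exact absurd this (lt_irrefl _)
      · rw [← hi, h]
      · exact absurd h (not_lt.mpr (Fin.le_last i))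
    have hD0 : distToSet G (x' 0) L₀ = 0 := by rw [hx'0]; omega
    have hsum' := hcard1' hc1
    refine ⟨x', ψ, hbij', hψ, hsψ, hmono', hdist', ?_, ?_, hψ0, hstep'⟩
    · intro h2; exact absurd hc1 (by omega)
    · intro _
      exact ⟨mem_of_distToSet_eq_zero hG hL hD0, by omega⟩
end

section
/- For odd n ≥ 3, every radio labeling of P_n □ P (path on n vertices times the Petersen graph) has span at least 5n² − n + 6; in particular the lower bound 5n² − n + 5 obtained from the level-sum argument with L₀ the central Petersen-fiber cannot be achieved. -/
set_option maxHeartbeats 1000000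
open SimpleGraph Finset
abbrev PV := {s : Finset (Fin 5) // s.card = 2}
lemma card_PV : Fintype.card PV = 10 := by decide
instance : DecidableRel petersen.Adj := fun a b => inferInstanceAs (Decidable (Disjoint a.1 b.1))
lemma petersen_mid : ∀ a b : PV, a ≠ b → ¬ petersen.Adj a b → ∃ c, petersen.Adj a c ∧ petersen.Adj c b := by decide

lemma petersen_walk (a b : PV) : ∃ w : petersen.Walk a b, w.length ≤ 2 := by
  by_cases hab : a = b
  · subst hab; exact ⟨.nil, by simp⟩
  by_cases hadj : petersen.Adj a b
  · exact ⟨.cons hadj .nil, by simp⟩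
  obtain ⟨c, h1, h2⟩ := petersen_mid a b hab hadj
  exact ⟨.cons h1 (.cons h2 .nil), by simp⟩

lemma petersen_connected : petersen.Connected := by
  rw [connected_iff]
  refine ⟨fun a b => ?_, ⟨⟨{0,1}, by decide⟩⟩⟩
  obtain ⟨w, -⟩ := petersen_walk a b
  exact ⟨w⟩

lemma petersen_dist_le (a b : PV) : petersen.dist a b ≤ 2 := by
  obtain ⟨w, hw⟩ := petersen_walk a b
  exact le_trans (SimpleGraph.dist_le w) hw

lemma petersen_dist_two : petersen.dist ⟨{0,1}, by decide⟩ ⟨{0,2}, by decide⟩ = 2 := by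
  have hne : (⟨{0,1}, by decide⟩ : PV) ≠ ⟨{0,2}, by decide⟩ := by decide
  have hnadj : ¬ petersen.Adj ⟨{0,1}, by decide⟩ ⟨{0,2}, by decide⟩ := by decide
  have h1 := petersen_dist_le ⟨{0,1}, by decide⟩ ⟨{0,2}, by decide⟩
  have h0 : petersen.dist ⟨{0,1}, by decide⟩ ⟨{0,2}, by decide⟩ ≠ 0 := by
    intro h; exact hne (petersen_connected.dist_eq_zero_iff.mp h)
  have h2 : petersen.dist ⟨{0,1}, by decide⟩ ⟨{0,2}, by decide⟩ ≠ 1 := by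
    intro h; exact hnadj (SimpleGraph.dist_eq_one_iff_adj.mp h)
  omega

section boxdist
variable {α β : Type*} {G : SimpleGraph α} {H : SimpleGraph β}

lemma boxProd_walk_le {x y : α × β} (hG : G.Connected) (hH : H.Connected)
    (w : (G □ H).Walk x y) : G.dist x.1 y.1 + H.dist x.2 y.2 ≤ w.length := by
  induction w with
  | nil => simp
  | @cons x b y h w ih =>
    rw [SimpleGraph.boxProd_adj] at h
    rcases h with ⟨h1, h2⟩ | ⟨h1, h2⟩
    · have t : G.dist x.1 y.1 ≤ G.dist x.1 b.1 + G.dist b.1 y.1 := hG.dist_triangle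
      have e1 : G.dist x.1 b.1 = 1 := SimpleGraph.dist_eq_one_iff_adj.mpr h1
      have e2 : H.dist x.2 y.2 = H.dist b.2 y.2 := by rw [h2]
      simp only [SimpleGraph.Walk.length_cons]
      omega
    · have t : H.dist x.2 y.2 ≤ H.dist x.2 b.2 + H.dist b.2 y.2 := hH.dist_triangle
      have e1 : H.dist x.2 b.2 = 1 := SimpleGraph.dist_eq_one_iff_adj.mpr h1
      have e2 : G.dist x.1 y.1 = G.dist b.1 y.1 := by rw [h2]
      simp only [SimpleGraph.Walk.length_cons]
      omega

lemma boxProd_dist (hG : G.Connected) (hH : H.Connected) (x y : α × β) :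
    (G □ H).dist x y = G.dist x.1 y.1 + H.dist x.2 y.2 := by
  obtain ⟨x1, x2⟩ := x
  obtain ⟨y1, y2⟩ := y
  refine le_antisymm ?_ ?_
  · obtain ⟨wG, hwG⟩ := hG.exists_walk_length_eq_dist x1 y1
    obtain ⟨wH, hwH⟩ := hH.exists_walk_length_eq_dist x2 y2
    refine le_trans (SimpleGraph.dist_le ((wG.boxProdLeft H x2).append (wH.boxProdRight G y1))) ?_
    rw [SimpleGraph.Walk.length_append]
    simp only [SimpleGraph.Walk.boxProdLeft, SimpleGraph.Walk.boxProdRight,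
      SimpleGraph.Walk.length_map]
    have e1 := SimpleGraph.Walk.length_map (G.boxProdLeft H x2).toHom wG
    have e2 := SimpleGraph.Walk.length_map (G.boxProdRight H y1).toHom wH
    change (wG.map (G.boxProdLeft H x2).toHom).length
      + (wH.map (G.boxProdRight H y1).toHom).length ≤ _
    omega
  · obtain ⟨w, hw⟩ := (hG.boxProd hH).exists_walk_length_eq_dist (x1, x2) (y1, y2)
    rw [← hw]
    exact boxProd_walk_le hG hH w
end boxdist

section pathdist
variable {n : ℕ}

lemma pathGraph_walk_le {i j : Fin n} (w : (pathGraph n).Walk i j) :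
    |(i : ℤ) - (j : ℤ)| ≤ w.length := by
  induction w with
  | nil => simp
  | @cons x b y h w ih =>
    rw [SimpleGraph.pathGraph_adj] at h
    have h' : (x.val : ℤ) + 1 = b.val ∨ (b.val : ℤ) + 1 = x.val := by
      rcases h with h | h
      · left; exact_mod_cast congrArg (Nat.cast : ℕ → ℤ) h
      · right; exact_mod_cast congrArg (Nat.cast : ℕ → ℤ) h
    have hb : |(x : ℤ) - b| = 1 := by
      rcases h' with h' | h'
      · rw [show (x:ℤ) - b = -1 by omega]; simp
      · rw [show (x:ℤ) - b = 1 by omega]; simp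
    have t := abs_sub_le (x:ℤ) (b:ℤ) (y:ℤ)
    simp only [SimpleGraph.Walk.length_cons]
    push_cast
    linarith

lemma pathGraph_dist_le' (hn : 1 ≤ n) : ∀ (k : ℕ) (i j : Fin n), j.val = i.val + k →
    (pathGraph n).dist i j ≤ k := by
  intro k
  induction k with
  | zero => intro i j h; have : i = j := Fin.ext (by omega); simp [this]
  | succ k ih =>
    intro i j h
    have hconn : (pathGraph n).Connected := by
      obtain ⟨m, rfl⟩ : ∃ m, n = m + 1 := ⟨n - 1, by omega⟩
      exact SimpleGraph.pathGraph_connected m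
    have hi1 : i.val + 1 < n := by omega
    set i' : Fin n := ⟨i.val + 1, hi1⟩ with hi'
    have hadj : (pathGraph n).Adj i i' := by
      rw [SimpleGraph.pathGraph_adj]; left; rfl
    have h1 : (pathGraph n).dist i i' = 1 := SimpleGraph.dist_eq_one_iff_adj.mpr hadj
    have h2 : (pathGraph n).dist i' j ≤ k := ih i' j (by show (j:ℕ) = i.val + 1 + k; omega)
    have h3 := hconn.dist_triangle (u := i) (v := i') (w := j)
    omega

lemma pathGraph_dist (hn : 1 ≤ n) (i j : Fin n) :
    ((pathGraph n).dist i j : ℤ) = |(i : ℤ) - (j : ℤ)| := by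
  have hconn : (pathGraph n).Connected := by
    obtain ⟨m, rfl⟩ : ∃ m, n = m + 1 := ⟨n - 1, by omega⟩
    exact SimpleGraph.pathGraph_connected m
  refine le_antisymm ?_ ?_
  · rcases le_or_gt i.val j.val with hij | hij
    · have := pathGraph_dist_le' hn (j.val - i.val) i j (by omega)
      have habs : |(i:ℤ) - j| = (j.val : ℤ) - i.val := by
        rw [abs_sub_comm, abs_of_nonneg] <;> push_cast <;> omega
      rw [habs]; push_cast; omega
    · have := pathGraph_dist_le' hn (i.val - j.val) j i (by omega)
      rw [SimpleGraph.dist_comm] at this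
      have habs : |(i:ℤ) - j| = (i.val : ℤ) - j.val := by
        rw [abs_of_nonneg] <;> push_cast <;> omega
      rw [habs]; push_cast; omega
  · obtain ⟨w, hw⟩ := hconn.exists_walk_length_eq_dist i j
    rw [← hw]
    exact_mod_cast pathGraph_walk_le w
end pathdist
section diam
variable {n : ℕ}

lemma path_connected (hn : 1 ≤ n) : (pathGraph n).Connected := by
  obtain ⟨m, rfl⟩ : ∃ m, n = m + 1 := ⟨n - 1, by omega⟩
  exact SimpleGraph.pathGraph_connected m

lemma prodG_dist (hn : 1 ≤ n) (x y : Fin n × PV) :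
    ((pathGraph n □ petersen).dist x y : ℤ)
      = |(x.1 : ℤ) - (y.1 : ℤ)| + (petersen.dist x.2 y.2 : ℤ) := by
  rw [boxProd_dist (path_connected hn) petersen_connected]
  push_cast
  rw [pathGraph_dist hn]

lemma prodG_dist_le (hn : 1 ≤ n) (x y : Fin n × PV) :
    (pathGraph n □ petersen).dist x y ≤ n + 1 := by
  have h := prodG_dist hn x y
  have h1 : |(x.1 : ℤ) - (y.1 : ℤ)| ≤ (n : ℤ) - 1 := by
    have := x.1.isLt; have := y.1.isLt
    rw [abs_le]; constructor <;> push_cast <;> omega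
  have h2 := petersen_dist_le x.2 y.2
  have : ((pathGraph n □ petersen).dist x y : ℤ) ≤ (n : ℤ) + 1 := by
    rw [h]; push_cast; omega
  exact_mod_cast this

lemma prodG_diam (hn : 2 ≤ n) : (pathGraph n □ petersen).diam = n + 1 := by
  have hn1 : 1 ≤ n := by omega
  have hne : (pathGraph n □ petersen).ediam ≠ ⊤ := by
    have hle : (pathGraph n □ petersen).ediam ≤ (((n+1 : ℕ)) : ℕ∞) := by
      apply SimpleGraph.ediam_le_of_edist_le
      intro u v
      obtain ⟨w, hw⟩ := ((path_connected hn1).boxProd petersen_connected).exists_walk_length_eq_dist u v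
      calc (pathGraph n □ petersen).edist u v ≤ (w.length : ℕ∞) := SimpleGraph.edist_le w
      _ ≤ (((n+1:ℕ)) : ℕ∞) := by
          have := prodG_dist_le hn1 u v
          rw [hw]
          exact_mod_cast Nat.cast_le.mpr (by exact_mod_cast this)
    exact ne_top_of_le_ne_top (WithTop.natCast_ne_top _) hle
  -- witness pair at distance n+1
  have h0 : (0 : ℕ) < n := by omega
  set a : Fin n × PV := (⟨0, h0⟩, ⟨{0,1}, by decide⟩) with ha
  set b : Fin n × PV := (⟨n-1, by omega⟩, ⟨{0,2}, by decide⟩) with hb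
  have hd : (pathGraph n □ petersen).dist a b = n + 1 := by
    have h := prodG_dist hn1 a b
    rw [petersen_dist_two] at h
    have habs : |((0:ℕ) : ℤ) - ((n-1 : ℕ) : ℤ)| = (n : ℤ) - 1 := by
      rw [abs_sub_comm, abs_of_nonneg] <;> push_cast <;> omega
    have : ((pathGraph n □ petersen).dist a b : ℤ) = (n : ℤ) + 1 := by
      rw [h]
      simp only [ha, hb]
      push_cast
      rw [show |(0:ℤ) - ((n-1:ℕ):ℤ)| = ((n-1:ℕ):ℤ) by rw [abs_sub_comm]; simp]
      push_cast
      omega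
    exact_mod_cast this
  haveI : Nonempty (Fin n × PV) := ⟨a⟩
  refine le_antisymm ?_ ?_
  · obtain ⟨u, v, huv⟩ := SimpleGraph.exists_dist_eq_diam (G := pathGraph n □ petersen)
    rw [← huv]
    exact prodG_dist_le hn1 u v
  · rw [← hd]
    exact SimpleGraph.dist_le_diam hne

end diam

lemma level_sum (m : ℕ) : ∑ k ∈ Finset.range (2*m+1), |(k : ℤ) - m| = m * (m+1) := by
  induction m with
  | zero => simp
  | succ m ih =>
    have h1 : 2*(m+1)+1 = (2*m+2) + 1 := by ring
    rw [h1, Finset.sum_range_succ, Finset.sum_range_succ']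
    have h2 : ∀ k ∈ Finset.range (2*m+1), |((k+1 : ℕ) : ℤ) - ((m+1:ℕ):ℤ)| = |(k:ℤ) - m| := by
      intro k _
      push_cast
      congr 1
      ring
    rw [Finset.sum_congr rfl h2, ih]
    push_cast
    have e1 : |(0:ℤ) - ((m:ℤ)+1)| = (m:ℤ)+1 := by
      rw [show (0:ℤ) - ((m:ℤ)+1) = -((m:ℤ)+1) by ring, abs_neg, abs_of_nonneg (by positivity)]
    have e2 : |2*(m:ℤ)+2 - ((m:ℤ)+1)| = (m:ℤ)+1 := by
      rw [show 2*(m:ℤ)+2 - ((m:ℤ)+1) = (m:ℤ)+1 by ring, abs_of_nonneg (by positivity)]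
    rw [e1, e2]; ring

lemma min_zero_of (a b : ℤ) (h1 : 0 ≤ a) (h2 : 0 ≤ b) (h : a + b - |a - b| ≤ 1) :
    a = 0 ∨ b = 0 := by
  rcases abs_cases (a - b) with ⟨hc, _⟩ | ⟨hc, _⟩ <;> omega

lemma mul_nonpos_of_abs_sub (a b : ℤ) (h : |a - b| = |a| + |b|) : a * b ≤ 0 := by
  nlinarith [sq_abs (a - b), sq_abs a, sq_abs b, mul_nonneg (abs_nonneg a) (abs_nonneg b),
    abs_nonneg a, abs_nonneg b]

lemma abs_sub_le_abs_abs (a b : ℤ) (h : 0 ≤ a * b) : |a - b| ≤ abs (|a| - |b|) := by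
  rcases le_or_gt 0 a with ha | ha <;> rcases le_or_gt 0 b with hb | hb
  · rw [abs_of_nonneg ha, abs_of_nonneg hb]
  · have hb0 : a = 0 := by nlinarith
    subst hb0; simp
  · have ha0 : b = 0 := by nlinarith
    subst ha0; simp
  · rw [abs_of_neg ha, abs_of_neg hb, show -a - -b = -(a - b) by ring, abs_neg]

theorem stmt_10 (n : ℕ) (hn : 3 ≤ n) (ho : Odd n)
    (φ : Fin n × {s : Finset (Fin 5) // s.card = 2} → ℕ)
    (hφ : IsRadioLabeling (pathGraph n □ petersen) φ) :
    5 * n ^ 2 - n + 6 ≤ span φ := by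
  classical
  obtain ⟨m, hmm⟩ := ho
  have hm1 : 1 ≤ m := by omega
  have hnm : n = 2 * m + 1 := by omega
  have hn1 : 1 ≤ n := by omega
  have hdiam : (pathGraph n □ petersen).diam = n + 1 := prodG_diam (by omega)
  have hdle : ∀ x y : Fin n × PV, ((pathGraph n □ petersen).dist x y : ℤ) ≤ (n : ℤ) + 1 := by
    intro x y; exact_mod_cast prodG_dist_le hn1 x y
  -- injectivity of the labeling
  have hinj : Function.Injective φ := by
    intro u v huv
    by_contra hne
    have h := hφ u v hne
    rw [hdiam, huv] at h
    simp only [sub_self, abs_zero, add_zero] at h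
    have h2 := hdle u v
    push_cast at h
    linarith
  -- enumerate the vertices in increasing label order
  set S : Finset ℕ := Finset.image φ Finset.univ with hS0
  have hScard : S.card = 10 * n := by
    rw [hS0, Finset.card_image_of_injective _ hinj, Finset.card_univ, Fintype.card_prod,
      Fintype.card_fin, card_PV]; ring
  set g := S.orderIsoOfFin hScard with hg0
  have hXex : ∀ i : Fin (10 * n), ∃ v : Fin n × PV, φ v = (g i : ℕ) := by
    intro i
    obtain ⟨v, -, hv⟩ := Finset.mem_image.mp (g i).2
    exact ⟨v, hv⟩
  choose Xf hXf using hXex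
  set X : ℕ → Fin n × PV := fun k => Xf ⟨k % (10 * n), Nat.mod_lt _ (by omega)⟩ with hX0
  have hX : ∀ (k : ℕ) (hk : k < 10 * n), X k = Xf ⟨k, hk⟩ := by
    intro k hk
    simp only [hX0]
    congr 1
    exact Fin.ext (Nat.mod_eq_of_lt hk)
  have hφval : ∀ (k : ℕ) (hk : k < 10 * n), φ (X k) = (g ⟨k, hk⟩ : ℕ) := by
    intro k hk; rw [hX k hk]; exact hXf _
  have hφmono : ∀ j k, j < k → k < 10 * n → φ (X j) < φ (X k) := by
    intro j k hjk hk
    rw [hφval j (by omega), hφval k hk]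
    exact Subtype.coe_lt_coe.mpr (g.lt_iff_lt.mpr (by simp only [Fin.mk_lt_mk]; omega))
  have hXinj : ∀ j k, j < 10 * n → k < 10 * n → X j = X k → j = k := by
    intro j k hj hk hEq
    have h1 : (g ⟨j, hj⟩ : ℕ) = (g ⟨k, hk⟩ : ℕ) := by
      rw [← hφval j hj, ← hφval k hk, hEq]
    have h2 : (⟨j, hj⟩ : Fin (10 * n)) = ⟨k, hk⟩ := g.injective (Subtype.ext h1)
    exact Fin.mk.inj_iff.mp h2
  have hXsurj : ∀ v : Fin n × PV, ∃ k, k < 10 * n ∧ X k = v := by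
    intro v
    have hv : φ v ∈ S := by rw [hS0]; exact Finset.mem_image.mpr ⟨v, Finset.mem_univ v, rfl⟩
    refine ⟨(g.symm ⟨φ v, hv⟩).val, (g.symm ⟨φ v, hv⟩).isLt, ?_⟩
    apply hinj
    rw [hφval _ (g.symm ⟨φ v, hv⟩).isLt]
    have h1 : (⟨(g.symm ⟨φ v, hv⟩).val, (g.symm ⟨φ v, hv⟩).isLt⟩ : Fin (10 * n))
        = g.symm ⟨φ v, hv⟩ := Fin.ext rfl
    rw [h1, OrderIso.apply_symm_apply]
  -- radio condition along the order
  have hrad : ∀ j k, j < k → k < 10 * n →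
      ((n : ℤ) + 2) ≤ ((pathGraph n □ petersen).dist (X j) (X k) : ℤ)
        + ((φ (X k) : ℤ) - (φ (X j) : ℤ)) := by
    intro j k h1 h2
    have hne : X j ≠ X k := fun hc => by have := hXinj j k (by omega) h2 hc; omega
    have h := hφ _ _ hne
    rw [hdiam] at h
    have hlt : (φ (X j) : ℤ) < (φ (X k) : ℤ) := by exact_mod_cast hφmono j k h1 h2
    rw [abs_sub_comm, abs_of_nonneg (by linarith)] at h
    push_cast at h ⊢
    linarith
  set s : ℕ → ℤ := fun k => (((X k).1 : ℤ)) - m with hs0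
  have hdform : ∀ j k, ((pathGraph n □ petersen).dist (X j) (X k) : ℤ)
      = |s j - s k| + (petersen.dist (X j).2 (X k).2 : ℤ) := by
    intro j k
    rw [prodG_dist hn1]
    congr 2
    simp only [hs0]; ring
  have hpd2 : ∀ j k, (petersen.dist (X j).2 (X k).2 : ℤ) ≤ 2 := by
    intro j k; exact_mod_cast petersen_dist_le (X j).2 (X k).2
  have habs_sub : ∀ a b : ℤ, |a - b| ≤ |a| + |b| := by
    intro a b; simpa using abs_sub_le a 0 b
  set K : ℕ := 10 * n - 1 with hK0
  have hK : 10 * n = K + 1 := by omega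
  have hKz : (K : ℤ) = 10 * (n : ℤ) - 1 := by omega
  -- level sum
  have hSL : ∑ k ∈ Finset.range (K + 1), |s k| = 10 * ((m : ℤ) * (m + 1)) := by
    have h1 : ∑ k ∈ Finset.range (K + 1), |s k|
        = ∑ v : Fin n × PV, |((v.1 : ℤ)) - m| := by
      rw [← hK]
      apply Finset.sum_bij (i := fun k _ => X k)
      · intro a ha; exact Finset.mem_univ _
      · intro j hj k hk hEq
        rw [Finset.mem_range] at hj hk
        exact hXinj j k hj hk hEq
      · intro v _
        obtain ⟨k, hk, hXk⟩ := hXsurj v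
        exact ⟨k, Finset.mem_range.mpr hk, hXk⟩
      · intro a _; simp only [hs0]
    rw [h1, Fintype.sum_prod_type]
    have h4 : ∀ a : Fin n, ∑ _b : PV, |((a : ℤ)) - m| = 10 * |((a : ℤ)) - m| := by
      intro a
      rw [Finset.sum_const, Finset.card_univ, card_PV, nsmul_eq_mul]
      push_cast; ring
    rw [Finset.sum_congr rfl (fun a _ => h4 a), ← Finset.mul_sum]
    congr 1
    rw [Fin.sum_univ_eq_sum_range (fun k : ℕ => |(k : ℤ) - m|) n]
    rw [hnm]
    exact level_sum m
  -- telescoping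
  have htel : ∑ i ∈ Finset.range K, ((φ (X (i+1)) : ℤ) - (φ (X i) : ℤ))
      = (φ (X K) : ℤ) - (φ (X 0) : ℤ) :=
    Finset.sum_range_sub (fun k => (φ (X k) : ℤ)) K
  set SA : ℤ := ∑ i ∈ Finset.range K,
    (((φ (X (i+1)) : ℤ) - (φ (X i) : ℤ)) - ((n : ℤ) + 2)
      + ((pathGraph n □ petersen).dist (X i) (X (i+1)) : ℤ)) with hSA0
  set SB : ℤ := ∑ i ∈ Finset.range K,
    (|s i| + |s (i+1)| + 2 - ((pathGraph n □ petersen).dist (X i) (X (i+1)) : ℤ)) with hSB0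
  have hSAnn : ∀ i ∈ Finset.range K, (0:ℤ) ≤ ((φ (X (i+1)) : ℤ) - (φ (X i) : ℤ)) - ((n : ℤ) + 2)
      + ((pathGraph n □ petersen).dist (X i) (X (i+1)) : ℤ) := by
    intro i hi
    rw [Finset.mem_range] at hi
    have := hrad i (i+1) (by omega) (by omega)
    linarith
  have hSBnn : ∀ i ∈ Finset.range K, (0:ℤ) ≤ |s i| + |s (i+1)| + 2
      - ((pathGraph n □ petersen).dist (X i) (X (i+1)) : ℤ) := by
    intro i _
    rw [hdform i (i+1)]
    have := habs_sub (s i) (s (i+1))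
    have := hpd2 i (i+1)
    linarith
  have hSA_nonneg : 0 ≤ SA := hSA0 ▸ Finset.sum_nonneg hSAnn
  have hSB_nonneg : 0 ≤ SB := hSB0 ▸ Finset.sum_nonneg hSBnn
  -- main identity
  have hsuma : SA = ((φ (X K) : ℤ) - (φ (X 0) : ℤ)) - (K : ℤ) * ((n : ℤ) + 2)
      + ∑ i ∈ Finset.range K, ((pathGraph n □ petersen).dist (X i) (X (i+1)) : ℤ) := by
    rw [hSA0]
    rw [Finset.sum_add_distrib, Finset.sum_sub_distrib, htel, Finset.sum_const,
      Finset.card_range, nsmul_eq_mul]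
  have hsumb : SB = (2 * (10 * ((m : ℤ) * (m + 1))) - |s 0| - |s K|) + 2 * (K : ℤ)
      - ∑ i ∈ Finset.range K, ((pathGraph n □ petersen).dist (X i) (X (i+1)) : ℤ) := by
    rw [hSB0, Finset.sum_sub_distrib, Finset.sum_add_distrib, Finset.sum_add_distrib,
      Finset.sum_const, Finset.card_range, nsmul_eq_mul]
    have ha : ∑ i ∈ Finset.range K, |s i| = ∑ k ∈ Finset.range (K+1), |s k| - |s K| := by
      rw [Finset.sum_range_succ]; ring
    have hb : ∑ i ∈ Finset.range K, |s (i+1)| = ∑ k ∈ Finset.range (K+1), |s k| - |s 0| := by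
      rw [Finset.sum_range_succ']; ring
    rw [ha, hb, hSL]; ring
  have hmain : (φ (X K) : ℤ) - (φ (X 0) : ℤ)
      = 5 * (n:ℤ)^2 - n + 5 + (|s 0| + |s K| + SA + SB) := by
    have harith : (K : ℤ) * (n : ℤ) - 2 * (10 * ((m : ℤ) * (m + 1))) = 5 * (n:ℤ)^2 - n + 5 := by
      have hnz : (n : ℤ) = 2 * (m : ℤ) + 1 := by omega
      rw [hKz, hnz]; ring
    have hKn : (K:ℤ) * ((n:ℤ) + 2) = (K:ℤ) * (n:ℤ) + 2 * K := by ring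
    linarith [hsuma, hsumb, harith, hKn]
  by_cases hcase : 1 ≤ |s 0| + |s K| + SA + SB
  -- easy case: slack at least 1
  · have hfin : 5 * (n:ℤ)^2 - n + 6 ≤ (φ (X K) : ℤ) - (φ (X 0) : ℤ) := by
      rw [hmain]; linarith
    have hsp : φ (X K) - φ (X 0) ≤ span φ := by
      apply le_csSup ((Set.finite_range _).bddAbove)
      exact ⟨(X K, X 0), rfl⟩
    obtain ⟨Q, hQ⟩ : ∃ Q : ℕ, Q = n^2 := ⟨_, rfl⟩
    have hQn : n ≤ 5 * Q := by rw [hQ]; nlinarith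
    have hQc : ((Q : ℕ) : ℤ) = (n : ℤ)^2 := by rw [hQ]; push_cast; ring
    rw [← hQc] at hfin
    rw [show 5 * n^2 - n + 6 = 5 * Q - n + 6 by rw [hQ]]
    omega
  -- hard case: all slack zero, derive a contradiction
  · exfalso
    push_neg at hcase
    have hab0 := abs_nonneg (s 0)
    have habK := abs_nonneg (s K)
    have hl0 : |s 0| = 0 := by linarith
    have hlK : |s K| = 0 := by linarith
    have hSAz : SA = 0 := by linarith
    have hSBz : SB = 0 := by linarith
    have hAz := (Finset.sum_eq_zero_iff_of_nonneg hSAnn).mp (by rw [← hSA0]; exact hSAz)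
    have hBz := (Finset.sum_eq_zero_iff_of_nonneg hSBnn).mp (by rw [← hSB0]; exact hSBz)
    have hgapeq : ∀ i, i < K → (φ (X (i+1)) : ℤ) - (φ (X i) : ℤ)
        = (n : ℤ) + 2 - ((pathGraph n □ petersen).dist (X i) (X (i+1)) : ℤ) := by
      intro i hi
      have := hAz i (Finset.mem_range.mpr hi)
      linarith
    have hdeq : ∀ i, i < K → ((pathGraph n □ petersen).dist (X i) (X (i+1)) : ℤ)
        = |s i| + |s (i+1)| + 2 := by
      intro i hi
      have := hBz i (Finset.mem_range.mpr hi)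
      linarith
    have hsigns : ∀ i, i < K → s i * s (i+1) ≤ 0 := by
      intro i hi
      have h1 := hdeq i hi
      rw [hdform i (i+1)] at h1
      have h2 := hpd2 i (i+1)
      have h3 := habs_sub (s i) (s (i+1))
      have h4 : |s i - s (i+1)| = |s i| + |s (i+1)| := by linarith
      exact mul_nonpos_of_abs_sub _ _ h4
    -- the key claim: a vertex at maximal level has a neighbor (in the ordering) at level 0
    have hclaim : ∀ k, 1 ≤ k → k < K → |s k| = (m : ℤ) →
        |s (k-1)| = 0 ∨ |s (k+1)| = 0 := by
      intro k hk1 hkK hsm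
      have hk1' : k - 1 + 1 = k := by omega
      have hsk_ne : s k ≠ 0 := by
        intro hc; rw [hc] at hsm; simp only [abs_zero] at hsm; omega
      have hsg1 : s (k-1) * s k ≤ 0 := by
        have := hsigns (k-1) (by omega)
        rwa [hk1'] at this
      have hsg2 : s k * s (k+1) ≤ 0 := hsigns k hkK
      have hprod : 0 ≤ s (k-1) * s (k+1) := by
        rcases lt_trichotomy (s k) 0 with h | h | h
        · have ha : 0 ≤ s (k-1) := by nlinarith
          have hb : 0 ≤ s (k+1) := by nlinarith
          exact mul_nonneg ha hb
        · exact absurd h hsk_ne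
        · have ha : s (k-1) ≤ 0 := by nlinarith
          have hb : s (k+1) ≤ 0 := by nlinarith
          nlinarith
      have hDle : ((pathGraph n □ petersen).dist (X (k-1)) (X (k+1)) : ℤ)
          ≤ |(|s (k-1)| - |s (k+1)|)| + 2 := by
        rw [hdform (k-1) (k+1)]
        have h5 := abs_sub_le_abs_abs (s (k-1)) (s (k+1)) hprod
        have h6 := hpd2 (k-1) (k+1)
        linarith
      have hkrad := hrad (k-1) (k+1) (by omega) (by omega)
      have hg1 := hgapeq (k-1) (by omega)
      rw [hk1'] at hg1
      have hg2 := hgapeq k hkK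
      have hd1 := hdeq (k-1) (by omega)
      rw [hk1'] at hd1
      have hd2 := hdeq k hkK
      have hdiff : (φ (X (k+1)) : ℤ) - (φ (X (k-1)) : ℤ)
          = ((n:ℤ) + 2 - (|s (k-1)| + |s k| + 2)) + ((n:ℤ) + 2 - (|s k| + |s (k+1)| + 2)) := by
        rw [← hd1, ← hd2, ← hg1, ← hg2]; ring
      rw [hdiff, hsm] at hkrad
      have hnz : (n : ℤ) = 2 * (m : ℤ) + 1 := by omega
      apply min_zero_of _ _ (abs_nonneg _) (abs_nonneg _)
      rw [hnz] at hkrad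
      linarith [hDle]
    -- counting
    have hcnt : ∀ c : ℤ, ((Finset.range (K+1)).filter (fun k => |s k| = c)).card
        = ((Finset.univ : Finset (Fin n)).filter (fun u : Fin n => |((u : ℤ)) - m| = c)).card * 10 := by
      intro c
      have hb1 : ((Finset.range (K+1)).filter (fun k => |s k| = c)).card
          = ((Finset.univ : Finset (Fin n × PV)).filter (fun v => |((v.1 : ℤ)) - m| = c)).card := by
        apply Finset.card_bij (fun k _ => X k)
        · intro k hk
          simp only [Finset.mem_filter, Finset.mem_range] at hk
          simp only [Finset.mem_filter, Finset.mem_univ, true_and]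
          have := hk.2
          rw [hs0] at this
          exact this
        · intro j hj k hk hEq
          simp only [Finset.mem_filter, Finset.mem_range] at hj hk
          exact hXinj j k (by omega) (by omega) hEq
        · intro v hv
          simp only [Finset.mem_filter, Finset.mem_univ, true_and] at hv
          obtain ⟨k, hk, hXk⟩ := hXsurj v
          refine ⟨k, ?_, hXk⟩
          simp only [Finset.mem_filter, Finset.mem_range]
          refine ⟨by omega, ?_⟩
          rw [hs0]
          simp only
          rw [hXk]
          exact hv
      have hb2 : ((Finset.univ : Finset (Fin n × PV)).filter (fun v => |((v.1 : ℤ)) - m| = c))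
          = ((Finset.univ : Finset (Fin n)).filter (fun u : Fin n => |((u : ℤ)) - m| = c)) ×ˢ
            (Finset.univ : Finset PV) := by
        ext ⟨a, b⟩
        simp [Finset.mem_product]
      rw [hb1, hb2, Finset.card_product, Finset.card_univ, card_PV]
    have hTcard : ((Finset.range (K+1)).filter (fun k => |s k| = (m:ℤ))).card = 20 := by
      rw [hcnt]
      have hfT : ((Finset.univ : Finset (Fin n)).filter (fun u : Fin n => |((u : ℤ)) - m| = (m:ℤ)))
          = {(⟨0, by omega⟩ : Fin n), ⟨n-1, by omega⟩} := by
        ext u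
        have hu := u.isLt
        simp only [Finset.mem_filter, Finset.mem_univ, true_and, Finset.mem_insert,
          Finset.mem_singleton, Fin.ext_iff]
        rw [abs_eq (by positivity : (0:ℤ) ≤ (m:ℤ))]
        omega
      rw [hfT, Finset.card_insert_of_notMem (by simp only [Finset.mem_singleton, Fin.ext_iff]; omega),
        Finset.card_singleton]
    have hZcard : ((Finset.range (K+1)).filter (fun k => |s k| = (0:ℤ))).card = 10 := by
      rw [hcnt]
      have hfZ : ((Finset.univ : Finset (Fin n)).filter (fun u : Fin n => |((u : ℤ)) - m| = (0:ℤ)))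
          = {(⟨m, by omega⟩ : Fin n)} := by
        ext u
        have hu := u.isLt
        simp only [Finset.mem_filter, Finset.mem_univ, true_and, Finset.mem_singleton,
          Fin.ext_iff, abs_eq_zero, sub_eq_zero]
        omega
      rw [hfZ, Finset.card_singleton]
    set T := (Finset.range (K+1)).filter (fun k => |s k| = (m:ℤ)) with hT0
    set Z := (Finset.range (K+1)).filter (fun k => |s k| = (0:ℤ)) with hZ0
    have hTrange : ∀ k ∈ T, 1 ≤ k ∧ k + 1 ≤ K := by
      intro k hk
      simp only [hT0, Finset.mem_filter, Finset.mem_range] at hk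
      obtain ⟨hk1, hk2⟩ := hk
      constructor
      · rcases Nat.eq_zero_or_pos k with rfl | h
        · rw [hl0] at hk2; omega
        · omega
      · rcases eq_or_lt_of_le (Nat.lt_succ_iff.mp hk1) with rfl | h
        · rw [hlK] at hk2; omega
        · omega
    have hfZmem : ∀ k ∈ T, (if |s (k-1)| = 0 then k-1 else k+1) ∈ Z := by
      intro k hk
      obtain ⟨hk1, hk2⟩ := hTrange k hk
      simp only [hT0, Finset.mem_filter, Finset.mem_range] at hk
      rcases hclaim k hk1 (by omega) hk.2 with h | h
      · rw [if_pos h]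
        simp only [hZ0, Finset.mem_filter, Finset.mem_range]
        exact ⟨by omega, h⟩
      · by_cases h0 : |s (k-1)| = 0
        · rw [if_pos h0]
          simp only [hZ0, Finset.mem_filter, Finset.mem_range]
          exact ⟨by omega, h0⟩
        · rw [if_neg h0]
          simp only [hZ0, Finset.mem_filter, Finset.mem_range]
          exact ⟨by omega, h⟩
    have hcount := Finset.card_eq_sum_card_fiberwise hfZmem
    have hfib : ∀ b ∈ Z, (T.filter (fun k => (if |s (k-1)| = 0 then k-1 else k+1) = b)).card
        ≤ if b = 0 ∨ b = K then 1 else 2 := by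
      intro b hb
      split_ifs with hb0
      · rcases hb0 with rfl | rfl
        · have hsub : T.filter (fun k => (if |s (k-1)| = 0 then k-1 else k+1) = 0) ⊆ {1} := by
            intro k hk
            simp only [Finset.mem_filter] at hk
            obtain ⟨hkT, hkf⟩ := hk
            obtain ⟨hk1, hk2⟩ := hTrange k hkT
            simp only [Finset.mem_singleton]
            by_cases hc : |s (k-1)| = 0
            · rw [if_pos hc] at hkf; omega
            · rw [if_neg hc] at hkf; omega
          calc _ ≤ ({1} : Finset ℕ).card := Finset.card_le_card hsub
          _ = 1 := Finset.card_singleton 1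
        · have hsub : T.filter (fun k => (if |s (k-1)| = 0 then k-1 else k+1) = K) ⊆ {K-1} := by
            intro k hk
            simp only [Finset.mem_filter] at hk
            obtain ⟨hkT, hkf⟩ := hk
            obtain ⟨hk1, hk2⟩ := hTrange k hkT
            simp only [Finset.mem_singleton]
            by_cases hc : |s (k-1)| = 0
            · rw [if_pos hc] at hkf; omega
            · rw [if_neg hc] at hkf; omega
          calc _ ≤ ({K-1} : Finset ℕ).card := Finset.card_le_card hsub
          _ = 1 := Finset.card_singleton _
      · have hsub : T.filter (fun k => (if |s (k-1)| = 0 then k-1 else k+1) = b) ⊆ {b+1, b-1} := by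
          intro k hk
          simp only [Finset.mem_filter] at hk
          obtain ⟨hkT, hkf⟩ := hk
          obtain ⟨hk1, hk2⟩ := hTrange k hkT
          simp only [Finset.mem_insert, Finset.mem_singleton]
          push_neg at hb0
          by_cases hc : |s (k-1)| = 0
          · rw [if_pos hc] at hkf; omega
          · rw [if_neg hc] at hkf; omega
        calc _ ≤ ({b+1, b-1} : Finset ℕ).card := Finset.card_le_card hsub
        _ ≤ 2 := Finset.card_insert_le _ _ |>.trans (by simp)
    have hsumle : ∑ b ∈ Z, (T.filter (fun k => (if |s (k-1)| = 0 then k-1 else k+1) = b)).card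
        ≤ ∑ b ∈ Z, (if b = 0 ∨ b = K then 1 else 2) := Finset.sum_le_sum hfib
    have hZsplit : ∑ b ∈ Z, (if b = 0 ∨ b = K then 1 else 2)
        + (Z.filter (fun b => b = 0 ∨ b = K)).card = 2 * Z.card := by
      rw [Finset.card_filter, ← Finset.sum_add_distrib]
      have h : ∀ b ∈ Z, ((if b = 0 ∨ b = K then 1 else 2) + (if b = 0 ∨ b = K then 1 else 0) : ℕ)
          = 2 := by
        intro b _; split_ifs <;> rfl
      rw [Finset.sum_congr rfl h, Finset.sum_const, smul_eq_mul]
      ring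
    have hZfilt : (Z.filter (fun b => b = 0 ∨ b = K)).card = 2 := by
      have hset : Z.filter (fun b => b = 0 ∨ b = K) = {0, K} := by
        ext b
        simp only [Finset.mem_filter, Finset.mem_insert, Finset.mem_singleton, hZ0,
          Finset.mem_range]
        constructor
        · rintro ⟨_, h⟩; exact h
        · rintro (rfl | rfl)
          · exact ⟨⟨by omega, hl0⟩, Or.inl rfl⟩
          · exact ⟨⟨by omega, hlK⟩, Or.inr rfl⟩
      rw [hset, Finset.card_insert_of_notMem (by simp only [Finset.mem_singleton]; omega),
        Finset.card_singleton]
    rw [hTcard] at hcount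
    rw [hZcard] at hZsplit
    omega
end
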